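/- Suppose x ∈ R^n is s-sparse and x̂ ∈ R^n satisfies ‖x̂‖₁ - α‖x̂‖₂ ≤ ‖x‖₁ - α‖x‖₂ with 0 < α ≤ 1. Then h = x̂ - x satisfies ‖h_{-max(s)}‖₁ ≤ ‖h_{max(s)}‖₁ + α‖h‖₂. -/
import Mathlib


open Finset

noncomputable def l1 {n : ℕ} (x : Fin n → ℝ) : ℝ := ∑ i, |x i|
noncomputable def l2 {n : ℕ} (x : Fin n → ℝ) : ℝ := Real.sqrt (∑ i, (x i) ^ 2)
noncomputable def linf {n : ℕ} (x : Fin n → ℝ) : ℝ := ‖x‖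

/-- `restrict T x` is the vector equal to `x` on `T` and `0` elsewhere. -/
def restrict {n : ℕ} (T : Finset (Fin n)) (x : Fin n → ℝ) : Fin n → ℝ :=
  fun i => if i ∈ T then x i else 0

/-- `T` indexes `s` largest-in-absolute-value entries of `h`. -/
def IsMaxS {n : ℕ} (s : ℕ) (h : Fin n → ℝ) (T : Finset (Fin n)) : Prop :=
  T.card = s ∧ ∀ i ∈ T, ∀ j ∉ T, |h j| ≤ |h i|

/-- number of nonzero entries. -/
noncomputable def l0 {n : ℕ} (x : Fin n → ℝ) : ℕ := (Finset.univ.filter fun i => x i ≠ 0).card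

lemma l1_restrict' {n : ℕ} (T : Finset (Fin n)) (h : Fin n → ℝ) :
    l1 (_root_.restrict T h) = ∑ i ∈ T, |h i| := by
  unfold l1 _root_.restrict
  simp only [apply_ite abs, abs_zero]
  rw [Finset.sum_ite_mem, Finset.univ_inter]

lemma l2_eq_norm' {n : ℕ} (x : Fin n → ℝ) :
    l2 x = ‖(WithLp.equiv 2 (Fin n → ℝ)).symm x‖ := by
  rw [EuclideanSpace.norm_eq]
  simp [l2, Real.norm_eq_abs, sq_abs]

lemma l2_triangle' {n : ℕ} (x y : Fin n → ℝ) : l2 x ≤ l2 y + l2 (x - y) := by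
  rw [l2_eq_norm', l2_eq_norm', l2_eq_norm']
  have : (WithLp.equiv 2 (Fin n → ℝ)).symm x
      = (WithLp.equiv 2 (Fin n → ℝ)).symm y + (WithLp.equiv 2 (Fin n → ℝ)).symm (x - y) := by
    simp
  rw [this]
  exact norm_add_le _ _

lemma max_sum' {n s : ℕ} (h : Fin n → ℝ) (Th S : Finset (Fin n))
    (hTh : IsMaxS s h Th) (hS : S.card ≤ s) :
    ∑ i ∈ S, |h i| ≤ ∑ i ∈ Th, |h i| := by
  obtain ⟨hcard, hmax⟩ := hTh
  have hc1 := Finset.card_sdiff_add_card_inter S Th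
  have hc2 := Finset.card_sdiff_add_card_inter Th S
  rw [Finset.inter_comm] at hc2
  have hcle : (S \ Th).card ≤ (Th \ S).card := by omega
  have h1 : ∑ i ∈ S \ Th, |h i| ≤ ∑ i ∈ Th \ S, |h i| := by
    rcases (Th \ S).eq_empty_or_nonempty with he | hne
    · have : (S \ Th).card = 0 := by rw [he] at hcle; simpa using hcle
      rw [Finset.card_eq_zero] at this
      simp [this, he]
    · obtain ⟨i₀, hi₀, hmin⟩ := Finset.exists_min_image (Th \ S) (fun i => |h i|) hne
      have hi₀Th : i₀ ∈ Th := (Finset.mem_sdiff.mp hi₀).1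
      calc ∑ i ∈ S \ Th, |h i| ≤ (S \ Th).card • |h i₀| := by
            apply Finset.sum_le_card_nsmul
            intro j hj
            exact hmax i₀ hi₀Th j (Finset.mem_sdiff.mp hj).2
        _ ≤ (Th \ S).card • |h i₀| := by
            apply nsmul_le_nsmul_left (abs_nonneg _) hcle
        _ ≤ ∑ i ∈ Th \ S, |h i| := Finset.card_nsmul_le_sum _ _ _ fun j hj => hmin j hj
  have e1 := Finset.sum_inter_add_sum_sdiff S Th (fun i => |h i|)
  have e2 := Finset.sum_inter_add_sum_sdiff Th S (fun i => |h i|)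
  rw [Finset.inter_comm] at e2
  linarith

theorem stmt5 {n s : ℕ} (x xhat : Fin n → ℝ) (α : ℝ) (hα0 : 0 < α) (hα1 : α ≤ 1)
    (hsparse : l0 x ≤ s)
    (hmin : l1 xhat - α * l2 xhat ≤ l1 x - α * l2 x)
    (Th : Finset (Fin n)) (hTh : IsMaxS s (xhat - x) Th) :
    l1 (restrict Thᶜ (xhat - x)) ≤
      l1 (restrict Th (xhat - x)) + α * l2 (xhat - x) := by
  set h : Fin n → ℝ := xhat - x with hh
  have hhi : ∀ i, h i = xhat i - x i := fun i => rfl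
  set S : Finset (Fin n) := Finset.univ.filter (fun i => x i ≠ 0) with hSdef
  have hScard : S.card ≤ s := hsparse
  rw [l1_restrict', l1_restrict']
  -- split l1 h over Th and its complement
  have hsplit : ∑ i ∈ Th, |h i| + ∑ i ∈ Thᶜ, |h i| = l1 h :=
    Finset.sum_add_sum_compl Th _
  -- l2 triangle
  have htri : l2 xhat ≤ l2 x + l2 h := l2_triangle' xhat x
  have hl2nn : 0 ≤ l2 h := Real.sqrt_nonneg _
  -- lower bound for l1 xhat
  have hlb : l1 x + (∑ i ∈ Sᶜ, |h i| - ∑ i ∈ S, |h i|) ≤ l1 xhat := by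
    have hpt : ∀ i, |x i| + (if i ∈ S then -|h i| else |h i|) ≤ |xhat i| := by
      intro i
      by_cases hi : i ∈ S
      · simp only [hi, if_pos]
        have := abs_sub_abs_le_abs_sub (x i) (xhat i)
        have : |x i| - |xhat i| ≤ |h i| := by
          rw [hhi]; rw [abs_sub_comm] at this; simpa using this
        linarith
      · have hx0 : x i = 0 := by
          by_contra hne
          exact hi (Finset.mem_filter.mpr ⟨Finset.mem_univ i, hne⟩)
        simp only [hi, if_neg, not_false_iff, hx0, abs_zero, zero_add, hhi, hx0, sub_zero]
        exact le_refl _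
    have hsum : ∑ i, (|x i| + (if i ∈ S then -|h i| else |h i|)) ≤ ∑ i, |xhat i| :=
      Finset.sum_le_sum fun i _ => hpt i
    have hc : ∑ i, (if i ∈ S then -|h i| else |h i|)
        = -∑ i ∈ S, |h i| + ∑ i ∈ Sᶜ, |h i| := by
      rw [← Finset.sum_add_sum_compl S (fun i => if i ∈ S then -|h i| else |h i|)]
      rw [Finset.sum_congr rfl (fun i hi => if_pos hi),
        Finset.sum_congr rfl (fun i (hi : i ∈ Sᶜ) => if_neg (Finset.mem_compl.mp hi)),
        Finset.sum_neg_distrib]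
    rw [Finset.sum_add_distrib, hc] at hsum
    unfold l1
    linarith
  -- from hmin
  have hub : l1 xhat ≤ l1 x + α * l2 h := by
    have : α * l2 xhat ≤ α * (l2 x + l2 h) := mul_le_mul_of_nonneg_left htri hα0.le
    nlinarith
  have hkey : ∑ i ∈ Sᶜ, |h i| ≤ ∑ i ∈ S, |h i| + α * l2 h := by linarith
  have hAT : ∑ i ∈ S, |h i| ≤ ∑ i ∈ Th, |h i| := max_sum' h Th S hTh hScard
  have hSsplit : ∑ i ∈ S, |h i| + ∑ i ∈ Sᶜ, |h i| = l1 h :=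
    Finset.sum_add_sum_compl S _
  linarith
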